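/- For every ordered partition π of [n] into k blocks: cinvLSB(π) = (lsb + rsb)(O ∪ S)(π) + lsb(T ∪ C)(π) + inv(π) + 2·cinv(π), where cinvLSB = lsb + cbInv + binom(k,2) and cbInv = binom(k,2) − bInv. -/

import Mathlib

open Finset

/-- `B` is an ordered partition of `[n]` into `k` (nonempty, pairwise disjoint, covering)
blocks. -/
def isOP (n k : ℕ) (B : Fin k → Finset (Fin n)) : Prop :=
  (∀ j, (B j).Nonempty) ∧ (∀ j₁ j₂, j₁ ≠ j₂ → Disjoint (B j₁) (B j₂)) ∧ ∀ x, ∃ j, x ∈ B j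

/-- The type of ordered partitions of `[n]` into `k` blocks. -/
def OP (n k : ℕ) := {B : Fin k → Finset (Fin n) // isOP n k B}

namespace OP

variable {n k : ℕ}

/-- The opener (least element) of the `j`-th block. -/
def opener (π : OP n k) (j : Fin k) : Fin n := (π.1 j).min' (π.2.1 j)

/-- The closer (greatest element) of the `j`-th block. -/
def closer (π : OP n k) (j : Fin k) : Fin n := (π.1 j).max' (π.2.1 j)

/-- The index of the block containing `i`. -/
noncomputable def blk (π : OP n k) (i : Fin n) : Fin k := (π.2.2.2 i).choose

/-- `ros_i`: openers smaller than `i` in blocks to the right of `i`'s block. -/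
noncomputable def ros (π : OP n k) (i : Fin n) : ℕ :=
  (univ.filter fun j => π.blk i < j ∧ π.opener j < i).card

/-- `rob_i`: openers bigger than `i` in blocks to the right of `i`'s block. -/
noncomputable def rob (π : OP n k) (i : Fin n) : ℕ :=
  (univ.filter fun j => π.blk i < j ∧ i < π.opener j).card

/-- `rcs_i`: closers smaller than `i` in blocks to the right of `i`'s block. -/
noncomputable def rcs (π : OP n k) (i : Fin n) : ℕ :=
  (univ.filter fun j => π.blk i < j ∧ π.closer j < i).card

/-- `rcb_i`: closers bigger than `i` in blocks to the right of `i`'s block. -/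
noncomputable def rcb (π : OP n k) (i : Fin n) : ℕ :=
  (univ.filter fun j => π.blk i < j ∧ i < π.closer j).card

/-- `los_i`: openers smaller than `i` in blocks to the left of `i`'s block. -/
noncomputable def los (π : OP n k) (i : Fin n) : ℕ :=
  (univ.filter fun j => j < π.blk i ∧ π.opener j < i).card

/-- `lob_i`: openers bigger than `i` in blocks to the left of `i`'s block. -/
noncomputable def lob (π : OP n k) (i : Fin n) : ℕ :=
  (univ.filter fun j => j < π.blk i ∧ i < π.opener j).card

/-- `lcs_i`: closers smaller than `i` in blocks to the left of `i`'s block. -/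
noncomputable def lcs (π : OP n k) (i : Fin n) : ℕ :=
  (univ.filter fun j => j < π.blk i ∧ π.closer j < i).card

/-- `lcb_i`: closers bigger than `i` in blocks to the left of `i`'s block. -/
noncomputable def lcb (π : OP n k) (i : Fin n) : ℕ :=
  (univ.filter fun j => j < π.blk i ∧ i < π.closer j).card

/-- `rsb_i`: blocks to the right of `i`'s block with opener smaller and closer bigger
than `i`. -/
noncomputable def rsb (π : OP n k) (i : Fin n) : ℕ :=
  (univ.filter fun j => π.blk i < j ∧ π.opener j < i ∧ i < π.closer j).card

/-- `lsb_i`: blocks to the left of `i`'s block with opener smaller and closer bigger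
than `i`. -/
noncomputable def lsb (π : OP n k) (i : Fin n) : ℕ :=
  (univ.filter fun j => j < π.blk i ∧ π.opener j < i ∧ i < π.closer j).card

noncomputable def ROS (π : OP n k) : ℕ := ∑ i, π.ros i
noncomputable def ROB (π : OP n k) : ℕ := ∑ i, π.rob i
noncomputable def RCS (π : OP n k) : ℕ := ∑ i, π.rcs i
noncomputable def RCB (π : OP n k) : ℕ := ∑ i, π.rcb i
noncomputable def LOS (π : OP n k) : ℕ := ∑ i, π.los i
noncomputable def LOB (π : OP n k) : ℕ := ∑ i, π.lob i
noncomputable def LCS (π : OP n k) : ℕ := ∑ i, π.lcs i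
noncomputable def LCB (π : OP n k) : ℕ := ∑ i, π.lcb i
noncomputable def RSB (π : OP n k) : ℕ := ∑ i, π.rsb i
noncomputable def LSB (π : OP n k) : ℕ := ∑ i, π.lsb i

/-- The set of strict openers of `π`. -/
noncomputable def Oset (π : OP n k) : Finset (Fin n) :=
  univ.filter fun i => π.opener (π.blk i) = i ∧ 2 ≤ (π.1 (π.blk i)).card

/-- The set of singletons of `π`. -/
noncomputable def Sset (π : OP n k) : Finset (Fin n) :=
  univ.filter fun i => (π.1 (π.blk i)).card = 1

/-- The set of transients of `π`. -/
noncomputable def Tset (π : OP n k) : Finset (Fin n) :=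
  univ.filter fun i => π.opener (π.blk i) ≠ i ∧ π.closer (π.blk i) ≠ i

/-- The set of strict closers of `π`. -/
noncomputable def Cset (π : OP n k) : Finset (Fin n) :=
  univ.filter fun i => π.closer (π.blk i) = i ∧ 2 ≤ (π.1 (π.blk i)).card

/-- `inv π`: inversions of the permutation of `[k]` induced by the block ordering,
i.e. pairs of positions `j₁ < j₂` whose blocks have decreasing minima. -/
def inv (π : OP n k) : ℕ :=
  (univ.filter fun p : Fin k × Fin k => p.1 < p.2 ∧ π.opener p.2 < π.opener p.1).card

/-- `cinv π = C(k,2) - inv π`. -/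
def cinv (π : OP n k) : ℕ := k.choose 2 - π.inv

/-- `bInv π`: block inversions, i.e. pairs of positions `j₁ < j₂` with every element of
the `j₁`-st block greater than every element of the `j₂`-nd block. -/
def bInv (π : OP n k) : ℕ :=
  (univ.filter fun p : Fin k × Fin k => p.1 < p.2 ∧ π.closer p.2 < π.opener p.1).card

end OP


namespace OP

variable {n k : ℕ}

lemma mem_blk (π : OP n k) (i : Fin n) : i ∈ π.1 (π.blk i) := (π.2.2.2 i).choose_spec

lemma blk_eq (π : OP n k) {i : Fin n} {j : Fin k} (h : i ∈ π.1 j) : π.blk i = j := by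
  by_contra hne
  exact (Finset.disjoint_left.mp (π.2.2.1 _ _ hne) (π.mem_blk i)) h

lemma opener_mem (π : OP n k) (j : Fin k) : π.opener j ∈ π.1 j := Finset.min'_mem _ _

lemma closer_mem (π : OP n k) (j : Fin k) : π.closer j ∈ π.1 j := Finset.max'_mem _ _

lemma opener_le_closer (π : OP n k) (j : Fin k) : π.opener j ≤ π.closer j :=
  Finset.min'_le _ _ (π.closer_mem j)

lemma blk_opener (π : OP n k) (j : Fin k) : π.blk (π.opener j) = j := π.blk_eq (π.opener_mem j)

lemma closer_ne (π : OP n k) {i : Fin n} {j : Fin k} (h : j ≠ π.blk i) : π.closer j ≠ i := by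
  intro he
  subst he
  exact (Finset.disjoint_left.mp (π.2.2.1 _ _ h) (π.closer_mem j)) (π.mem_blk _)

lemma ros_split (π : OP n k) (i : Fin n) : π.ros i = π.rcs i + π.rsb i := by
  unfold ros rcs rsb
  rw [← Finset.card_union_of_disjoint]
  · congr 1
    ext j
    simp only [Finset.mem_union, Finset.mem_filter, Finset.mem_univ, true_and]
    constructor
    · rintro ⟨h1, h2⟩
      rcases lt_trichotomy (π.closer j) i with h | h | h
      · exact Or.inl ⟨h1, h⟩
      · exact absurd h (π.closer_ne h1.ne')
      · exact Or.inr ⟨h1, h2, h⟩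
    · rintro (⟨h1, h2⟩ | ⟨h1, h2, _⟩)
      · exact ⟨h1, lt_of_le_of_lt (π.opener_le_closer j) h2⟩
      · exact ⟨h1, h2⟩
  · rw [Finset.disjoint_left]
    intro j hj hj'
    simp only [Finset.mem_filter] at hj hj'
    exact absurd hj'.2.2.2 (not_lt.mpr hj.2.2.le)

lemma OS_eq (π : OP n k) :
    π.Oset ∪ π.Sset = univ.filter fun i => π.opener (π.blk i) = i := by
  ext i
  simp only [Oset, Sset, Finset.mem_union, Finset.mem_filter, Finset.mem_univ, true_and]
  constructor
  · rintro (⟨h, _⟩ | h)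
    · exact h
    · exact Finset.card_le_one.mp h.le _ (π.opener_mem _) _ (π.mem_blk i)
  · intro h
    rcases Nat.lt_or_ge (π.1 (π.blk i)).card 2 with hc | hc
    · have h1 := Finset.card_pos.mpr (π.2.1 (π.blk i))
      exact Or.inr (by omega)
    · exact Or.inl ⟨h, hc⟩

lemma TC_eq (π : OP n k) :
    π.Tset ∪ π.Cset = univ.filter fun i => ¬ π.opener (π.blk i) = i := by
  ext i
  simp only [Tset, Cset, Finset.mem_union, Finset.mem_filter, Finset.mem_univ, true_and]
  constructor
  · rintro (⟨h, _⟩ | ⟨h, hc⟩)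
    · exact h
    · have := Finset.min'_lt_max'_of_card (π.1 (π.blk i)) (by omega)
      rw [show (π.1 (π.blk i)).max' _ = π.closer (π.blk i) from rfl, h] at this
      exact this.ne
  · intro h
    have hc : 2 ≤ (π.1 (π.blk i)).card :=
      Finset.one_lt_card.mpr ⟨_, π.opener_mem (π.blk i), _, π.mem_blk i, h⟩
    rcases eq_or_ne (π.closer (π.blk i)) i with hcl | hcl
    · exact Or.inr ⟨hcl, hc⟩
    · exact Or.inl ⟨h, hcl⟩

lemma card_filter_prod (Q : Fin k × Fin k → Prop) [DecidablePred Q] :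
    (univ.filter Q).card = ∑ j₁, (univ.filter fun j₂ => Q (j₁, j₂)).card := by
  rw [Finset.card_filter, Fintype.sum_prod_type]
  exact Finset.sum_congr rfl fun a _ => (Finset.card_filter _ _).symm

lemma sum_OS (π : OP n k) (f : Fin k → Fin n → ℕ) :
    ∑ i ∈ univ.filter (fun i => π.opener (π.blk i) = i), f (π.blk i) i
      = ∑ j, f j (π.opener j) := by
  apply Finset.sum_bij (fun i _ => π.blk i)
  · intro a _; exact Finset.mem_univ _
  · intro a ha b hb hab
    simp only [Finset.mem_filter] at ha hb
    rw [← ha.2, ← hb.2, hab]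
  · intro j _
    exact ⟨π.opener j, by simp [π.blk_opener], π.blk_opener j⟩
  · intro a ha
    simp only [Finset.mem_filter] at ha
    exact congrArg (f (π.blk a)) ha.2.symm

lemma inv_eq_sum (π : OP n k) :
    π.inv = ∑ i ∈ univ.filter (fun i => π.opener (π.blk i) = i), π.ros i := by
  rw [show π.inv =
      (univ.filter fun p : Fin k × Fin k => p.1 < p.2 ∧ π.opener p.2 < π.opener p.1).card
      from rfl,
    card_filter_prod,
    ← π.sum_OS fun j₁ x => (univ.filter fun j₂ => j₁ < j₂ ∧ π.opener j₂ < x).card]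
  rfl

lemma bInv_eq_sum (π : OP n k) :
    π.bInv = ∑ i ∈ univ.filter (fun i => π.opener (π.blk i) = i), π.rcs i := by
  rw [show π.bInv =
      (univ.filter fun p : Fin k × Fin k => p.1 < p.2 ∧ π.closer p.2 < π.opener p.1).card
      from rfl,
    card_filter_prod,
    ← π.sum_OS fun j₁ x => (univ.filter fun j₂ => j₁ < j₂ ∧ π.closer j₂ < x).card]
  rfl

lemma inv_le (π : OP n k) : π.inv ≤ k.choose 2 := by
  have h1 : π.inv ≤ (univ.filter fun p : Fin k × Fin k => p.1 < p.2).card := by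
    apply Finset.card_le_card
    intro p hp
    simp only [Finset.mem_filter] at hp ⊢
    exact ⟨hp.1, hp.2.1⟩
  have h2 : (univ.filter fun p : Fin k × Fin k => p.1 < p.2).card = k.choose 2 := by
    rw [card_filter_prod]
    have he : ∀ j₁ : Fin k, (univ.filter fun j₂ => j₁ < j₂).card = k - 1 - j₁ := by
      intro j₁
      rw [show (univ.filter fun j₂ => j₁ < j₂) = Finset.Ioi j₁ by ext; simp]
      exact Fin.card_Ioi j₁
    simp only [he]
    rw [Fin.sum_univ_eq_sum_range (fun m => k - 1 - m),
      Finset.sum_range_reflect (fun m => m) k, Finset.sum_range_id, Nat.choose_two_right]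
  omega

end OP

/-- `cinvLSB(π) = (lsb + rsb)(O ∪ S)(π) + lsb(T ∪ C)(π) + inv(π) + 2 cinv(π)`, where
`cinvLSB = lsb + cbInv + C(k,2)` and `cbInv = C(k,2) - bInv`. -/
theorem stmt8 {n k : ℕ} (π : OP n k) :
    π.LSB + (k.choose 2 - π.bInv) + k.choose 2 =
      (∑ i ∈ π.Oset ∪ π.Sset, (π.lsb i + π.rsb i)) +
        (∑ i ∈ π.Tset ∪ π.Cset, π.lsb i) + π.inv + 2 * π.cinv := by
  classical
  have hsplit : ∀ i, π.ros i = π.rcs i + π.rsb i := π.ros_split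
  have hOS := π.OS_eq
  have hTC := π.TC_eq
  have hinv : π.inv = π.bInv + ∑ i ∈ π.Oset ∪ π.Sset, π.rsb i := by
    rw [hOS, π.inv_eq_sum, π.bInv_eq_sum, ← Finset.sum_add_distrib]
    exact Finset.sum_congr rfl fun i _ => hsplit i
  have hLSB : π.LSB = (∑ i ∈ π.Oset ∪ π.Sset, π.lsb i) + ∑ i ∈ π.Tset ∪ π.Cset, π.lsb i := by
    rw [hOS, hTC, ← Finset.sum_union]
    · rw [Finset.filter_union_filter_not_eq]
      rfl
    · exact Finset.disjoint_filter_filter_not _ _ _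
  have hle := π.inv_le
  rw [Finset.sum_add_distrib]
  unfold OP.cinv
  omega
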